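/- Let X be a real p×n matrix partitioned as X = [Y; Z], where Y consists of the first k rows of X, suppose Y·Yᵀ is invertible, and let P = Yᵀ·(Y·Yᵀ)⁻¹·Y. If rank(Y) = rank(X), then X·P = X, and consequently (1/n)·X·P·Xᵀ = (1/n)·X·Xᵀ; i.e., the Nyström covariance estimator coincides with the sample covariance. -/

import Mathlib

open Matrix

/-- If `rank Y = rank X` where `Y` consists of the first `k` rows of `X`, then
`X·P = X` for the Nyström projection `P = Yᵀ·(Y·Yᵀ)⁻¹·Y`, and the Nyström covariance
estimator coincides with the sample covariance. -/
theorem nystrom_exact_when_full_rank (k m n : ℕ) (hk : 1 ≤ k)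
    (Y : Matrix (Fin k) (Fin n) ℝ) (Z : Matrix (Fin m) (Fin n) ℝ)
    (hY : IsUnit (Y * Yᵀ))
    (hrank : Y.rank = (Matrix.fromRows Y Z).rank) :
    Matrix.fromRows Y Z * (Yᵀ * (Y * Yᵀ)⁻¹ * Y) = Matrix.fromRows Y Z ∧
    (n : ℝ)⁻¹ • (Matrix.fromRows Y Z * (Yᵀ * (Y * Yᵀ)⁻¹ * Y) * (Matrix.fromRows Y Z)ᵀ) =
      (n : ℝ)⁻¹ • (Matrix.fromRows Y Z * (Matrix.fromRows Y Z)ᵀ) := by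
  have hdet : IsUnit (Y * Yᵀ).det := (Matrix.isUnit_iff_isUnit_det _).mp hY
  have hinv : (Y * Yᵀ) * (Y * Yᵀ)⁻¹ = 1 := Matrix.mul_nonsing_inv _ hdet
  set X := Matrix.fromRows Y Z with hX
  have hle : LinearMap.range Yᵀ.mulVecLin ≤ LinearMap.range Xᵀ.mulVecLin := by
    rintro v ⟨c, rfl⟩
    refine ⟨Sum.elim c 0, ?_⟩
    simp [hX, Matrix.transpose_fromRows, Matrix.fromCols_mulVec_sumElim,
      Matrix.mulVec_transpose]
  have heq : LinearMap.range Yᵀ.mulVecLin = LinearMap.range Xᵀ.mulVecLin := by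
    apply Submodule.eq_of_le_of_finrank_eq hle
    have h1 : Yᵀ.rank = Xᵀ.rank := by
      rw [Matrix.rank_transpose, Matrix.rank_transpose, hrank]
    simpa [Matrix.rank] using h1
  have hrow : ∀ i, ∃ c, Yᵀ.mulVec c = fun j => Z i j := by
    intro i
    have hmem : (fun j => Z i j) ∈ LinearMap.range Xᵀ.mulVecLin := by
      refine ⟨Pi.single (Sum.inr i) 1, ?_⟩
      ext j
      simp [Matrix.mulVecLin_apply, Matrix.mulVec, dotProduct, Pi.single_apply, hX]
    rw [← heq] at hmem
    exact hmem
  choose C hC using hrow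
  have hZ : Z = Matrix.of C * Y := by
    ext i j
    have := congrFun (hC i) j
    simp [Matrix.mulVec, Matrix.mul_apply, dotProduct] at this ⊢
    rw [← this]
    exact Finset.sum_congr rfl fun l _ => mul_comm _ _
  have hYP : Y * (Yᵀ * (Y * Yᵀ)⁻¹ * Y) = Y := by
    rw [← Matrix.mul_assoc, ← Matrix.mul_assoc, hinv, Matrix.one_mul]
  have hZP : Z * (Yᵀ * (Y * Yᵀ)⁻¹ * Y) = Z := by
    rw [hZ]
    rw [← Matrix.mul_assoc, ← Matrix.mul_assoc, Matrix.mul_assoc (Matrix.of C) Y Yᵀ,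
      Matrix.mul_assoc (Matrix.of C) (Y * Yᵀ), hinv, Matrix.mul_one]
  have h1 : X * (Yᵀ * (Y * Yᵀ)⁻¹ * Y) = X := by
    rw [hX, Matrix.fromRows_mul, hYP, hZP]
  exact ⟨h1, by rw [h1]⟩
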